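/- Let ν be a probability measure on (0, ∞) and define the shape function β_ν(r) = ∫_0^r x dν(x) = ∫ x·1_{x ≤ r} dν(x). Let U be a nonnegative random variable with P(U ≤ t) ≤ t for all t ∈ [0,1], and let V be any nonnegative random variable (with arbitrary joint distribution with U). Then for every c > 0, E[ 1_{U ≤ c·β_ν(V)} / V ] ≤ c. -/

import Mathlib

open MeasureTheory ENNReal Set

/-- Part (iii) of Lemma 3.2: for a shape function `β_ν(r) = ∫_{(0,r]} x dν(x)`
associated to a probability measure `ν` on `(0,∞)`, and any nonnegative random
variable `V`, if `U` is stochastically lower bounded by a uniform variable on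
`[0,1]` then `E[1_{U ≤ c β_ν(V)} / V] ≤ c` for all `c > 0`. -/
theorem dependency_control_arbitrary_dependence
    {Ω : Type*} [MeasurableSpace Ω] (P : Measure Ω) [IsProbabilityMeasure P]
    (U V : Ω → ℝ) (hU : Measurable U) (hV : Measurable V)
    (hUpos : ∀ ω, 0 ≤ U ω) (hVpos : ∀ ω, 0 ≤ V ω)
    (hUnif : ∀ t : ℝ, 0 ≤ t → t ≤ 1 → P {ω | U ω ≤ t} ≤ ENNReal.ofReal t)
    (ν : Measure ℝ) [IsProbabilityMeasure ν] (hν : ν (Set.Iic 0) = 0)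
    (β : ℝ → ℝ) (hβ : ∀ r : ℝ, β r = ∫ x in Set.Ioc 0 r, x ∂ν)
    (c : ℝ) (hc : 0 < c) :
    ∫⁻ ω in {ω | U ω ≤ c * β (V ω) ∧ 0 < V ω}, ENNReal.ofReal (V ω)⁻¹ ∂P
      ≤ ENNReal.ofReal c := by
  -- basic facts about β
  have hInt : ∀ r : ℝ, IntegrableOn (fun x : ℝ => x) (Ioc 0 r) ν := by
    intro r
    refine Integrable.mono' (integrable_const r) measurable_id.aestronglyMeasurable ?_
    filter_upwards [ae_restrict_mem measurableSet_Ioc] with x hx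
    rw [Real.norm_eq_abs, abs_of_pos hx.1]; exact hx.2
  have hβnn : ∀ r, 0 ≤ β r := by
    intro r; rw [hβ]
    exact setIntegral_nonneg measurableSet_Ioc fun x hx => le_of_lt hx.1
  have hβmono : Monotone β := by
    intro r s hrs
    rw [hβ r, hβ s]
    refine setIntegral_mono_set (hInt s) ?_ ?_
    · filter_upwards [ae_restrict_mem measurableSet_Ioc] with x hx; exact le_of_lt hx.1
    · exact Filter.Eventually.of_forall (Ioc_subset_Ioc_right hrs)
  have hβmeas : Measurable β := hβmono.measurable
  -- extended uniform bound
  have hUnif' : ∀ t : ℝ, 0 ≤ t → P {ω | U ω ≤ t} ≤ ENNReal.ofReal t := by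
    intro t ht
    rcases le_or_gt t 1 with h | h
    · exact hUnif t ht h
    · calc P {ω | U ω ≤ t} ≤ 1 := prob_le_one
        _ = ENNReal.ofReal 1 := by simp
        _ ≤ ENNReal.ofReal t := ENNReal.ofReal_le_ofReal h.le
  set A : Set Ω := {ω | U ω ≤ c * β (V ω) ∧ 0 < V ω} with hA
  -- layer cake
  have hlayer : ∫⁻ ω in A, ENNReal.ofReal (V ω)⁻¹ ∂P
      = ∫⁻ t in Ioi (0:ℝ), (P.restrict A) {ω | t ≤ (V ω)⁻¹} :=
    lintegral_eq_lintegral_meas_le _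
      (Filter.Eventually.of_forall fun ω => inv_nonneg.mpr (hVpos ω))
      hV.inv.aemeasurable
  -- bound each slice
  have hslice : ∀ t : ℝ, t ∈ Ioi (0:ℝ) →
      (P.restrict A) {ω | t ≤ (V ω)⁻¹} ≤ ENNReal.ofReal (c * β t⁻¹) := by
    intro t ht
    have ht0 : (0:ℝ) < t := ht
    have hsub : {ω | t ≤ (V ω)⁻¹} ∩ A ⊆ {ω | U ω ≤ c * β t⁻¹} := by
      rintro ω ⟨h1, h2, h3⟩
      have hVle : V ω ≤ t⁻¹ := by
        have := inv_anti₀ ht0 h1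
        rwa [inv_inv] at this
      exact h2.trans (by
        have := hβmono hVle
        nlinarith)
    calc (P.restrict A) {ω | t ≤ (V ω)⁻¹}
        = P ({ω | t ≤ (V ω)⁻¹} ∩ A) := by
          rw [Measure.restrict_apply (measurableSet_le measurable_const hV.inv : MeasurableSet {ω | t ≤ (V ω)⁻¹})]
      _ ≤ P {ω | U ω ≤ c * β t⁻¹} := measure_mono hsub
      _ ≤ ENNReal.ofReal (c * β t⁻¹) :=
          hUnif' _ (mul_nonneg hc.le (hβnn _))
  -- the kernel on the product
  set G : ℝ × ℝ → ℝ≥0∞ := fun p =>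
    if 0 < p.2 ∧ p.2 ≤ p.1⁻¹ then ENNReal.ofReal p.2 else 0 with hG
  have hGmeas : Measurable G := by
    refine Measurable.ite ?_ (measurable_ofReal.comp measurable_snd) measurable_const
    exact (measurableSet_lt measurable_const measurable_snd).inter
      (measurableSet_le measurable_snd measurable_fst.inv)
  have hrepr : ∀ t : ℝ, ENNReal.ofReal (β t⁻¹) = ∫⁻ x, G (t, x) ∂ν := by
    intro t
    rw [hβ]
    rw [ofReal_integral_eq_lintegral_ofReal (hInt t⁻¹)
      ((ae_restrict_mem measurableSet_Ioc).mono fun x hx => le_of_lt hx.1)]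
    rw [← lintegral_indicator measurableSet_Ioc]
    refine lintegral_congr fun x => ?_
    simp only [hG, Set.indicator_apply, mem_Ioc]
  -- the inner integral over t is at most 1
  have hinner : ∀ x : ℝ, ∫⁻ t in Ioi (0:ℝ), G (t, x) ≤ 1 := by
    intro x
    rcases le_or_gt x 0 with hx | hx
    · have : ∀ t : ℝ, G (t, x) = 0 := by
        intro t; simp only [hG]; rw [if_neg]; rintro ⟨h1, -⟩; exact absurd hx (not_le.mpr h1)
      simp [this]
    · have heq : ∫⁻ t in Ioi (0:ℝ), G (t, x)
          = ∫⁻ t in Ioi (0:ℝ), (Ioc (0:ℝ) x⁻¹).indicator (fun _ => ENNReal.ofReal x) t := by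
        refine setLIntegral_congr_fun measurableSet_Ioi
          (fun t ht => ?_)
        have ht0 : (0:ℝ) < t := ht
        simp only [hG, Set.indicator_apply, mem_Ioc]
        have hiff : (0 < x ∧ x ≤ t⁻¹) ↔ (0 < t ∧ t ≤ x⁻¹) := by
          constructor
          · rintro ⟨-, h2⟩
            refine ⟨ht0, ?_⟩
            have := inv_anti₀ hx h2; rwa [inv_inv] at this
          · rintro ⟨-, h2⟩
            refine ⟨hx, ?_⟩
            have := inv_anti₀ ht0 h2; rwa [inv_inv] at this
        by_cases h : 0 < x ∧ x ≤ t⁻¹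
        · rw [if_pos h, if_pos (hiff.mp h)]
        · rw [if_neg h, if_neg fun h' => h (hiff.mpr h')]
      rw [heq, lintegral_indicator measurableSet_Ioc, setLIntegral_const,
        Measure.restrict_apply measurableSet_Ioc]
      have hsub : Ioc (0:ℝ) x⁻¹ ∩ Ioi 0 = Ioc (0:ℝ) x⁻¹ := by
        ext y; simp only [mem_inter_iff, mem_Ioc, mem_Ioi]; tauto
      rw [hsub, Real.volume_Ioc, ← ENNReal.ofReal_mul (le_of_lt hx)]
      rw [sub_zero, mul_inv_cancel₀ (ne_of_gt hx)]
      simp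
  -- put everything together
  calc ∫⁻ ω in A, ENNReal.ofReal (V ω)⁻¹ ∂P
      = ∫⁻ t in Ioi (0:ℝ), (P.restrict A) {ω | t ≤ (V ω)⁻¹} := hlayer
    _ ≤ ∫⁻ t in Ioi (0:ℝ), ENNReal.ofReal (c * β t⁻¹) := by
        refine setLIntegral_mono ?_ hslice
        exact measurable_ofReal.comp ((hβmeas.comp measurable_inv).const_mul c)
    _ = ENNReal.ofReal c * ∫⁻ t in Ioi (0:ℝ), ENNReal.ofReal (β t⁻¹) := by
        rw [← lintegral_const_mul' _ _ ENNReal.ofReal_ne_top]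
        refine lintegral_congr fun t => ?_
        rw [ENNReal.ofReal_mul hc.le]
    _ = ENNReal.ofReal c * ∫⁻ t in Ioi (0:ℝ), ∫⁻ x, G (t, x) ∂ν := by
        simp_rw [hrepr]
    _ = ENNReal.ofReal c * ∫⁻ x, (∫⁻ t in Ioi (0:ℝ), G (t, x)) ∂ν := by
        rw [lintegral_lintegral_swap hGmeas.aemeasurable]
    _ ≤ ENNReal.ofReal c * ∫⁻ _ : ℝ, (1:ℝ≥0∞) ∂ν := by
        refine mul_le_mul_right (lintegral_mono fun x => ?_) _
        exact hinner x
    _ = ENNReal.ofReal c := by simp
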